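/- Let x be a positive bounded operator on H with Tr(x) < ∞ and suppose Tr(Θ(x)) = d·Tr(x). Then for every positive bounded operator y on H with y ≤ x, one has Tr(Θ(y)) = d·Tr(y). -/

import Mathlib

open Filter Finset ContinuousLinearMap
open scoped ENNReal

set_option maxHeartbeats 1000000
set_option synthInstance.maxHeartbeats 1000000

/-- The trace (in `[0,∞]`) of an operator on a complex Hilbert space, computed in a
Hilbert (orthonormal) basis `b`: `Tr A = ∑ᵢ ⟨bᵢ, A bᵢ⟩` (real part, clamped to `[0,∞]`).
For a positive operator this is the usual trace, independent of the choice of basis. -/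
noncomputable def opTrace {H : Type*} [NormedAddCommGroup H] [InnerProductSpace ℂ H]
    [CompleteSpace H] {ι : Type*} (b : HilbertBasis ι ℂ H) (A : H →L[ℂ] H) : ℝ≥0∞ :=
  ∑' i, ENNReal.ofReal (inner ℂ (b i) (A (b i)) : ℂ).re

section Aux

variable {H : Type*} [NormedAddCommGroup H] [InnerProductSpace ℂ H] [CompleteSpace H]
  {ι : Type*} (b : HilbertBasis ι ℂ H)

lemma re_inner_nonneg {A : H →L[ℂ] H} (hA : 0 ≤ A) (v : H) : 0 ≤ (inner ℂ v (A v) : ℂ).re := by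
  rw [ContinuousLinearMap.nonneg_iff_isPositive] at hA
  exact hA.re_inner_nonneg_right v

lemma opTrace_add {A B : H →L[ℂ] H} (hA : 0 ≤ A) (hB : 0 ≤ B) :
    opTrace b (A + B) = opTrace b A + opTrace b B := by
  unfold opTrace
  rw [← ENNReal.tsum_add]
  refine tsum_congr fun i => ?_
  rw [← ENNReal.ofReal_add (re_inner_nonneg hA _) (re_inner_nonneg hB _)]
  simp [inner_add_right]

lemma opTrace_zero : opTrace b (0 : H →L[ℂ] H) = 0 := by
  unfold opTrace
  simp

lemma opTrace_sum {κ : Type*} (s : Finset κ) (f : κ → H →L[ℂ] H)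
    (hf : ∀ k ∈ s, 0 ≤ f k) :
    opTrace b (∑ k ∈ s, f k) = ∑ k ∈ s, opTrace b (f k) := by
  classical
  induction s using Finset.cons_induction with
  | empty => simpa using opTrace_zero b
  | cons k s hk ih =>
    rw [Finset.sum_cons, Finset.sum_cons,
      opTrace_add b (hf k (Finset.mem_cons_self _ _))
        (Finset.sum_nonneg fun j hj => hf j (Finset.mem_cons_of_mem hj)),
      ih fun j hj => hf j (Finset.mem_cons_of_mem hj)]

lemma opTrace_mono {A B : H →L[ℂ] H} (h : A ≤ B) : opTrace b A ≤ opTrace b B := by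
  refine ENNReal.tsum_le_tsum fun i => ENNReal.ofReal_le_ofReal ?_
  have := re_inner_nonneg (sub_nonneg.mpr h) (b i)
  simp only [ContinuousLinearMap.sub_apply, inner_sub_right, map_sub, Complex.sub_re] at this
  linarith

lemma opTrace_star_mul (a : H →L[ℂ] H) :
    opTrace b (star a * a) = ∑' i, ENNReal.ofReal (‖a (b i)‖ ^ 2) := by
  unfold opTrace
  refine tsum_congr fun i => ?_
  congr 1
  have : (inner ℂ (b i) ((star a * a) (b i)) : ℂ) = inner ℂ (a (b i)) (a (b i)) := by
    simp only [ContinuousLinearMap.mul_apply, ContinuousLinearMap.star_eq_adjoint]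
    rw [ContinuousLinearMap.adjoint_inner_right]
  rw [this, inner_self_eq_norm_sq_to_K]
  norm_cast

lemma parseval_ofReal (x : H) :
    ENNReal.ofReal (‖x‖ ^ 2) = ∑' i, ENNReal.ofReal (‖(inner ℂ (b i) x : ℂ)‖ ^ 2) := by
  have h := b.hasSum_inner_mul_inner x x
  have hterm : ∀ i : ι, (inner ℂ x (b i) : ℂ) * inner ℂ (b i) x
      = ((‖(inner ℂ (b i) x : ℂ)‖ ^ 2 : ℝ) : ℂ) := by
    intro i
    rw [← inner_conj_symm x (b i), RCLike.conj_mul]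
    norm_cast
  have h2 : HasSum (fun i : ι => ((‖(inner ℂ (b i) x : ℂ)‖ ^ 2 : ℝ) : ℂ)) ((‖x‖ ^ 2 : ℝ) : ℂ) := by
    have hx : (inner ℂ x x : ℂ) = ((‖x‖ ^ 2 : ℝ) : ℂ) := by
      rw [inner_self_eq_norm_sq_to_K]; norm_cast
    rw [← hx]
    exact h.congr_fun fun i => (hterm i).symm
  have h3 : HasSum (fun i : ι => ‖(inner ℂ (b i) x : ℂ)‖ ^ 2) (‖x‖ ^ 2) := by
    have := h2.mapL Complex.reCLM
    simpa [← Complex.ofReal_pow] using this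
  rw [← h3.tsum_eq, ENNReal.ofReal_tsum_of_nonneg (fun i => sq_nonneg _) h3.summable]

lemma tsum_norm_sq_star (a : H →L[ℂ] H) :
    ∑' i, ENNReal.ofReal (‖a (b i)‖ ^ 2) = ∑' i, ENNReal.ofReal (‖(star a) (b i)‖ ^ 2) := by
  calc ∑' j, ENNReal.ofReal (‖a (b j)‖ ^ 2)
      = ∑' j, ∑' i, ENNReal.ofReal (‖(inner ℂ (b i) (a (b j)) : ℂ)‖ ^ 2) := by
        exact tsum_congr fun j => parseval_ofReal b _
    _ = ∑' i, ∑' j, ENNReal.ofReal (‖(inner ℂ (b i) (a (b j)) : ℂ)‖ ^ 2) := ENNReal.tsum_comm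
    _ = ∑' i, ENNReal.ofReal (‖(star a) (b i)‖ ^ 2) := by
        refine tsum_congr fun i => ?_
        rw [parseval_ofReal b ((star a) (b i))]
        refine tsum_congr fun j => ?_
        have hnorm : ‖(inner ℂ (b j) ((star a) (b i)) : ℂ)‖ = ‖(inner ℂ (b i) (a (b j)) : ℂ)‖ := by
          rw [ContinuousLinearMap.star_eq_adjoint, ContinuousLinearMap.adjoint_inner_right]
          exact norm_inner_symm _ _
        rw [hnorm]

lemma inner_mul_star_self (s : H →L[ℂ] H) (v : H) :
    (inner ℂ v ((s * star s) v) : ℂ) = inner ℂ ((star s) v) ((star s) v) := by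
  have : (s * star s) v = (ContinuousLinearMap.adjoint (star s)) ((star s) v) := by
    rw [ContinuousLinearMap.star_eq_adjoint, ContinuousLinearMap.adjoint_adjoint]
    rfl
  rw [this, ContinuousLinearMap.adjoint_inner_right]

lemma re_inner_one_sub_mul_star (s : H →L[ℂ] H) (v : H) :
    (inner ℂ ((1 - s * star s) v) v : ℂ).re = ‖v‖ ^ 2 - ‖(star s) v‖ ^ 2 := by
  rw [ContinuousLinearMap.sub_apply, inner_sub_left, Complex.sub_re,
    ContinuousLinearMap.one_apply]
  have h1 : (inner ℂ v v : ℂ).re = ‖v‖ ^ 2 := by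
    rw [inner_self_eq_norm_sq_to_K]; norm_cast
  have h2 : (inner ℂ ((s * star s) v) v : ℂ).re = ‖(star s) v‖ ^ 2 := by
    rw [← inner_conj_symm, Complex.conj_re, inner_mul_star_self,
      inner_self_eq_norm_sq_to_K]
    norm_cast
  rw [h1, h2]

lemma mul_star_le_one {s : H →L[ℂ] H} (h : ∀ v : H, ‖(star s) v‖ ^ 2 ≤ ‖v‖ ^ 2) :
    s * star s ≤ 1 := by
  rw [ContinuousLinearMap.le_def, ContinuousLinearMap.isPositive_def']
  refine ⟨(IsSelfAdjoint.one _).sub (IsSelfAdjoint.mul_star_self s), fun v => ?_⟩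
  rw [ContinuousLinearMap.reApplyInnerSelf, RCLike.re_to_complex,
    re_inner_one_sub_mul_star]
  linarith [h v]

lemma norm_star_apply_le {s : H →L[ℂ] H} (h : s * star s ≤ 1) (v : H) :
    ‖(star s) v‖ ≤ ‖v‖ := by
  have hp : (1 - s * star s).IsPositive := (ContinuousLinearMap.le_def _ _).mp h
  have h0 := hp.re_inner_nonneg_left v
  rw [RCLike.re_to_complex, re_inner_one_sub_mul_star] at h0
  nlinarith [norm_nonneg ((star s) v), norm_nonneg v]

lemma norm_le_one_of_mul_star {s : H →L[ℂ] H} (h : s * star s ≤ 1) : ‖s‖ ≤ 1 := by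
  rw [← norm_star]
  exact ContinuousLinearMap.opNorm_le_bound _ zero_le_one fun v => by
    simpa using norm_star_apply_le h v

lemma opTrace_conj_le (a : H →L[ℂ] H) {z : H →L[ℂ] H} (hz : 0 ≤ z) (ha : ‖a‖ ≤ 1) :
    opTrace b (a * z * star a) ≤ opTrace b z := by
  set r := CFC.sqrt z with hrdef
  have hr : 0 ≤ r := CFC.sqrt_nonneg z
  have hrr : r * r = z := CFC.sqrt_mul_sqrt_self z hz
  have hrsa : IsSelfAdjoint r := IsSelfAdjoint.of_nonneg hr
  have h1 : a * z * star a = star (star (a * r)) * star (a * r) := by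
    rw [star_star, star_mul, hrsa.star_eq, ← hrr]
    noncomm_ring
  rw [h1, opTrace_star_mul]
  calc ∑' i, ENNReal.ofReal (‖(star (a * r)) (b i)‖ ^ 2)
      = ∑' i, ENNReal.ofReal (‖(a * r) (b i)‖ ^ 2) := (tsum_norm_sq_star b (a * r)).symm
    _ ≤ ∑' i, ENNReal.ofReal (‖r (b i)‖ ^ 2) := by
        refine ENNReal.tsum_le_tsum fun i => ENNReal.ofReal_le_ofReal ?_
        have hle : ‖(a * r) (b i)‖ ≤ ‖r (b i)‖ := by
          calc ‖a (r (b i))‖ ≤ ‖a‖ * ‖r (b i)‖ := ContinuousLinearMap.le_opNorm a _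
            _ ≤ 1 * ‖r (b i)‖ := mul_le_mul_of_nonneg_right ha (norm_nonneg _)
            _ = ‖r (b i)‖ := one_mul _
        nlinarith [norm_nonneg ((a * r) (b i)), norm_nonneg (r (b i))]
    _ = opTrace b (star r * r) := (opTrace_star_mul b r).symm
    _ = opTrace b z := by rw [hrsa.star_eq, hrr]

end Aux
section Aux2

variable {H : Type*} [NormedAddCommGroup H] [InnerProductSpace ℂ H] [CompleteSpace H]

lemma sum_sq_star_apply_le {n : ℕ} {t : Fin n → H →L[ℂ] H}
    (hcontr : ∑ i, t i * star (t i) ≤ 1) (v : H) :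
    ∑ i, ‖(star (t i)) v‖ ^ 2 ≤ ‖v‖ ^ 2 := by
  have hp : (1 - ∑ i, t i * star (t i)).IsPositive :=
    (ContinuousLinearMap.le_def _ _).mp hcontr
  have h0 := hp.re_inner_nonneg_left v
  rw [RCLike.re_to_complex] at h0
  have hre : (inner ℂ ((1 - ∑ i, t i * star (t i)) v) v : ℂ).re
      = ‖v‖ ^ 2 - ∑ i, ‖(star (t i)) v‖ ^ 2 := by
    rw [ContinuousLinearMap.sub_apply, inner_sub_left, Complex.sub_re,
      ContinuousLinearMap.one_apply]
    have h1 : (inner ℂ v v : ℂ).re = ‖v‖ ^ 2 := by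
      rw [inner_self_eq_norm_sq_to_K]; norm_cast
    have h2 : (inner ℂ ((∑ i, t i * star (t i)) v) v : ℂ).re
        = ∑ i, ‖(star (t i)) v‖ ^ 2 := by
      rw [ContinuousLinearMap.sum_apply, sum_inner, Complex.re_sum]
      refine Finset.sum_congr rfl fun i _ => ?_
      rw [← inner_conj_symm, Complex.conj_re, inner_mul_star_self,
        inner_self_eq_norm_sq_to_K]
      norm_cast
    rw [h1, h2]
  rw [hre] at h0
  linarith

lemma cs_bound {n : ℕ} {t : Fin n → H →L[ℂ] H}
    (hcontr : ∑ i, t i * star (t i) ≤ 1) (u : Fin n → ℂ) (hu : ∑ i, ‖u i‖ ^ 2 ≤ 1) :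
    (∑ i, u i • t i) * star (∑ i, u i • t i) ≤ 1 := by
  refine mul_star_le_one fun v => ?_
  have h1 : ‖(star (∑ i, u i • t i)) v‖ ≤ ∑ i, ‖u i‖ * ‖(star (t i)) v‖ := by
    rw [star_sum, ContinuousLinearMap.sum_apply]
    refine (norm_sum_le _ _).trans (Finset.sum_le_sum fun i _ => ?_)
    rw [star_smul, ContinuousLinearMap.smul_apply, norm_smul]
    simp
  have h2 : (∑ i, ‖u i‖ * ‖(star (t i)) v‖) ^ 2
      ≤ (∑ i, ‖u i‖ ^ 2) * ∑ i, ‖(star (t i)) v‖ ^ 2 :=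
    Finset.sum_mul_sq_le_sq_mul_sq _ _ _
  have h3 := sum_sq_star_apply_le hcontr v
  have h4 : 0 ≤ ∑ i, ‖u i‖ * ‖(star (t i)) v‖ :=
    Finset.sum_nonneg fun i _ => mul_nonneg (norm_nonneg _) (norm_nonneg _)
  have h5 : ‖(star (∑ i, u i • t i)) v‖ ^ 2 ≤ (∑ i, ‖u i‖ * ‖(star (t i)) v‖) ^ 2 :=
    pow_le_pow_left₀ (norm_nonneg _) h1 2
  have h6 : 0 ≤ ∑ i, ‖(star (t i)) v‖ ^ 2 := Finset.sum_nonneg fun i _ => sq_nonneg _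
  nlinarith

lemma sum_conj_reindex {n m : ℕ} (t : Fin n → H →L[ℂ] H) (s : Fin m → H →L[ℂ] H)
    (c : Fin n → Fin m → ℂ) (ht : ∀ i, t i = ∑ k, c i k • s k)
    (horth : ∀ k l, (∑ i, c i k * starRingEnd ℂ (c i l)) = if k = l then 1 else 0)
    (z : H →L[ℂ] H) :
    ∑ i, t i * z * star (t i) = ∑ k, s k * z * star (s k) := by
  have expand : ∀ i, t i * z * star (t i)
      = ∑ k, ∑ l, (c i k * starRingEnd ℂ (c i l)) • (s k * z * star (s l)) := by
    intro i
    rw [ht i, star_sum, Finset.sum_mul, Finset.sum_mul]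
    refine Finset.sum_congr rfl fun k _ => ?_
    rw [Finset.mul_sum]
    refine Finset.sum_congr rfl fun l _ => ?_
    rw [star_smul, smul_mul_assoc, smul_mul_assoc, mul_smul_comm, smul_smul]
    rfl
  calc ∑ i, t i * z * star (t i)
      = ∑ k, ∑ l, (∑ i, c i k * starRingEnd ℂ (c i l)) • (s k * z * star (s l)) := by
        rw [Finset.sum_congr rfl fun i _ => expand i, Finset.sum_comm]
        refine Finset.sum_congr rfl fun k _ => ?_
        rw [Finset.sum_comm]
        refine Finset.sum_congr rfl fun l _ => ?_
        rw [Finset.sum_smul]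
    _ = ∑ k, s k * z * star (s k) := by
        refine Finset.sum_congr rfl fun k _ => ?_
        rw [Finset.sum_congr rfl fun l (_ : l ∈ univ) => by rw [horth k l]]
        simp

lemma euclid_reduction {W : Type*} [AddCommGroup W] [Module ℂ W] {n : ℕ}
    (φ : EuclideanSpace ℂ (Fin n) →ₗ[ℂ] W) :
    ∃ (m : ℕ) (c : Fin n → Fin m → ℂ) (v : Fin m → EuclideanSpace ℂ (Fin n)),
      m = Module.finrank ℂ (LinearMap.range φ) ∧
      (∀ i, φ (EuclideanSpace.single i 1) = ∑ k, c i k • φ (v k)) ∧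
      (∀ k l, ∑ i, c i k * starRingEnd ℂ (c i l) = if k = l then 1 else 0) ∧
      (∀ k, ∑ i, ‖v k i‖ ^ 2 ≤ 1) := by
  classical
  set K := LinearMap.ker φ with hK
  have hdim : Module.finrank ℂ ↥Kᗮ = Module.finrank ℂ (LinearMap.range φ) := by
    have h1 := Submodule.finrank_add_finrank_orthogonal K
    have h2 := LinearMap.finrank_range_add_finrank_ker φ
    rw [← hK] at h2
    have h3 : Module.finrank ℂ (EuclideanSpace ℂ (Fin n)) = n := finrank_euclideanSpace_fin
    rw [h3] at h1 h2
    omega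
  letI instI : Inner ℂ ↥Kᗮ := (Submodule.innerProductSpace Kᗮ).toInner
  set m := Module.finrank ℂ ↥Kᗮ with hm
  let e : OrthonormalBasis (Fin m) ℂ ↥Kᗮ := stdOrthonormalBasis ℂ ↥Kᗮ
  have hip : ∀ (p : Fin m) (i : Fin n),
      (inner ℂ ((e p : EuclideanSpace ℂ (Fin n))) (EuclideanSpace.single i (1:ℂ)) : ℂ)
        = starRingEnd ℂ ((e p : EuclideanSpace ℂ (Fin n)) i) := by
    intro p i
    rw [EuclideanSpace.inner_single_right, one_mul]
  refine ⟨m, fun i k => inner ℂ ((e k : EuclideanSpace ℂ (Fin n))) (EuclideanSpace.single i (1:ℂ)),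
    fun k => (e k : EuclideanSpace ℂ (Fin n)), hdim, ?_, ?_, ?_⟩
  · intro i
    set δ : EuclideanSpace ℂ (Fin n) := EuclideanSpace.single i (1 : ℂ) with hδ
    set P := Kᗮ.orthogonalProjection with hP
    have hmem : δ - ↑(P δ) ∈ K := by
      have := Submodule.sub_starProjection_mem_orthogonal (K := Kᗮ) δ
      rwa [Submodule.orthogonal_orthogonal] at this
    have hproj : φ δ = φ ↑(P δ) := by
      have h0 : φ (δ - ↑(P δ)) = 0 := hmem
      rw [map_sub] at h0
      exact sub_eq_zero.mp h0
    have hsum : (↑(P δ) : EuclideanSpace ℂ (Fin n))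
        = ∑ k, (inner ℂ (e k) (P δ) : ℂ) • (↑(e k) : EuclideanSpace ℂ (Fin n)) := by
      have h4 := congrArg (Subtype.val) (e.sum_repr (P δ)).symm
      simpa [e.repr_apply_apply] using h4
    have hinner : ∀ k, (inner ℂ (e k) (P δ) : ℂ)
        = inner ℂ ((e k : EuclideanSpace ℂ (Fin n))) δ := by
      intro k
      rw [Submodule.coe_inner]
      have hz : (inner ℂ ((e k : EuclideanSpace ℂ (Fin n))) (δ - ↑(P δ)) : ℂ) = 0 := by
        rw [inner_eq_zero_symm]
        exact (Submodule.mem_orthogonal K ((e k : EuclideanSpace ℂ (Fin n)))).mp (e k).2 _ hmem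
      rw [inner_sub_right] at hz
      exact (sub_eq_zero.mp hz).symm
    calc φ δ = φ ↑(P δ) := hproj
      _ = ∑ k, (inner ℂ (e k) (P δ) : ℂ) • φ ↑(e k) := by
          rw [hsum, map_sum]
          exact Finset.sum_congr rfl fun k _ => by rw [map_smul]
      _ = ∑ k, (inner ℂ ((e k : EuclideanSpace ℂ (Fin n))) δ : ℂ) • φ ↑(e k) := by
          exact Finset.sum_congr rfl fun k _ => by rw [hinner]
  · intro k l
    have hterm : ∀ i : Fin n,
        (inner ℂ ((e k : EuclideanSpace ℂ (Fin n))) (EuclideanSpace.single i (1:ℂ)) : ℂ)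
        * starRingEnd ℂ (inner ℂ ((e l : EuclideanSpace ℂ (Fin n))) (EuclideanSpace.single i (1:ℂ)) : ℂ)
        = starRingEnd ℂ ((e k : EuclideanSpace ℂ (Fin n)) i)
          * ((e l : EuclideanSpace ℂ (Fin n)) i) := by
      intro i
      rw [hip, hip]
      simp
    rw [Finset.sum_congr rfl fun i _ => hterm i]
    have hpi : (inner ℂ ((e k : EuclideanSpace ℂ (Fin n))) ((e l : EuclideanSpace ℂ (Fin n))) : ℂ)
        = ∑ i, starRingEnd ℂ ((e k : EuclideanSpace ℂ (Fin n)) i)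
            * ((e l : EuclideanSpace ℂ (Fin n)) i) := by
      rw [PiLp.inner_apply]
      exact Finset.sum_congr rfl fun i _ => by simp [RCLike.inner_apply, mul_comm]
    rw [← hpi, ← Submodule.coe_inner]
    exact orthonormal_iff_ite.mp e.orthonormal k l
  · intro k
    have hn : ‖(e k : EuclideanSpace ℂ (Fin n))‖ = 1 := by
      have := e.orthonormal.1 k
      exact this
    have hs : Real.sqrt (∑ i, ‖(e k : EuclideanSpace ℂ (Fin n)) i‖ ^ 2) = 1 := by
      rw [← EuclideanSpace.norm_eq, hn]
    rw [Real.sqrt_eq_one.mp hs]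

end Aux2
section Aux3

variable {H : Type*} [NormedAddCommGroup H] [InnerProductSpace ℂ H] [CompleteSpace H]

lemma exists_reduction {n : ℕ} (t : Fin n → H →L[ℂ] H) :
    ∃ (m : ℕ) (s : Fin m → H →L[ℂ] H) (c : Fin n → Fin m → ℂ),
      m = Module.finrank ℂ (Submodule.span ℂ (Set.range t)) ∧
      (∀ i, t i = ∑ k, c i k • s k) ∧
      (∀ k l, (∑ i, c i k * starRingEnd ℂ (c i l)) = if k = l then 1 else 0) ∧
      (∀ k, ∃ u : Fin n → ℂ, s k = ∑ i, u i • t i ∧ ∑ i, ‖u i‖ ^ 2 ≤ 1) := by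
  classical
  let φ : EuclideanSpace ℂ (Fin n) →ₗ[ℂ] (H →L[ℂ] H) :=
    { toFun := fun c => ∑ i, c i • t i
      map_add' := by
        intro a c
        simp only [PiLp.add_apply]
        rw [← Finset.sum_add_distrib]
        exact Finset.sum_congr rfl fun i _ => add_smul _ _ _
      map_smul' := by
        intro a c
        simp only [PiLp.smul_apply, RingHom.id_apply]
        rw [Finset.smul_sum]
        exact Finset.sum_congr rfl fun i _ => by rw [smul_eq_mul, mul_smul] }
  have hφ : ∀ c : EuclideanSpace ℂ (Fin n), φ c = ∑ i, c i • t i := fun _ => rfl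
  have hφsingle : ∀ i, φ (EuclideanSpace.single i (1 : ℂ)) = t i := by
    intro i
    rw [hφ]
    simp [EuclideanSpace.single_apply, ite_smul]
  have hrange : LinearMap.range φ = Submodule.span ℂ (Set.range t) := by
    apply le_antisymm
    · rintro _ ⟨c, rfl⟩
      rw [hφ]
      exact Submodule.sum_mem _ fun i _ =>
        Submodule.smul_mem _ _ (Submodule.subset_span ⟨i, rfl⟩)
    · rw [Submodule.span_le]
      rintro _ ⟨i, rfl⟩
      exact ⟨EuclideanSpace.single i (1 : ℂ), hφsingle i⟩
  obtain ⟨m, c, v, hm, hcomb, horth, hunit⟩ := euclid_reduction φ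
  refine ⟨m, fun k => φ (v k), c, by rw [hm, hrange], ?_, horth, ?_⟩
  · intro i
    rw [← hφsingle i]
    exact hcomb i
  · intro k
    exact ⟨fun i => v k i, (hφ (v k)), hunit k⟩

lemma trace_theta_le {ι : Type*} (b : HilbertBasis ι ℂ H) {n : ℕ}
    {t : Fin n → H →L[ℂ] H} (hcontr : ∑ i, t i * star (t i) ≤ 1)
    {z : H →L[ℂ] H} (hz : 0 ≤ z) :
    opTrace b (∑ i, t i * z * star (t i))
      ≤ (Module.finrank ℂ (Submodule.span ℂ (Set.range t)) : ℝ≥0∞) * opTrace b z := by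
  obtain ⟨m, s, c, hm, hcomb, horth, hunit⟩ := exists_reduction t
  rw [sum_conj_reindex t s c hcomb horth z]
  rw [opTrace_sum b _ _ fun k _ => star_right_conjugate_nonneg hz (s k)]
  calc ∑ k, opTrace b (s k * z * star (s k))
      ≤ ∑ _k : Fin m, opTrace b z := by
        refine Finset.sum_le_sum fun k _ => ?_
        obtain ⟨u, hsk, hu⟩ := hunit k
        have hb1 : s k * star (s k) ≤ 1 := by
          rw [hsk]
          exact cs_bound hcontr u hu
        exact opTrace_conj_le b (s k) hz (norm_le_one_of_mul_star hb1)
    _ = (m : ℝ≥0∞) * opTrace b z := by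
        rw [Finset.sum_const, Finset.card_univ, Fintype.card_fin, nsmul_eq_mul]
    _ = _ := by rw [hm]

end Aux3

/-- Hereditary trace scaling: if `Tr(Θ(x)) = d * Tr(x)` for a positive trace-class
`x`, then `Tr(Θ(y)) = d * Tr(y)` for every positive operator `y ≤ x`. -/
theorem trace_scaling_hereditary
    {H : Type*} [NormedAddCommGroup H] [InnerProductSpace ℂ H] [CompleteSpace H]
    {ι : Type*} (b : HilbertBasis ι ℂ H)
    (n : ℕ) (t : Fin n → H →L[ℂ] H)
    (hcontr : ∑ i, t i * star (t i) ≤ 1)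
    (Θ : (H →L[ℂ] H) → (H →L[ℂ] H))
    (hΘ : ∀ x, Θ x = ∑ i, t i * x * star (t i))
    (d : ℕ) (hd : d = Module.finrank ℂ (Submodule.span ℂ (Set.range t)))
    (x : H →L[ℂ] H) (hx : x.IsPositive) (hxfin : opTrace b x ≠ ⊤)
    (hscale : opTrace b (Θ x) = (d : ℝ≥0∞) * opTrace b x) :
    ∀ y : H →L[ℂ] H, y.IsPositive → y ≤ x →
      opTrace b (Θ y) = (d : ℝ≥0∞) * opTrace b y := by
  intro y hy hyx
  have hy0 : 0 ≤ y := (ContinuousLinearMap.nonneg_iff_isPositive y).mpr hy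
  have hw0 : 0 ≤ x - y := sub_nonneg.mpr hyx
  have hΘadd : Θ x = Θ y + Θ (x - y) := by
    rw [hΘ, hΘ, hΘ, ← Finset.sum_add_distrib]
    refine Finset.sum_congr rfl fun i _ => ?_
    noncomm_ring
  have hΘy0 : 0 ≤ Θ y := by
    rw [hΘ]
    exact Finset.sum_nonneg fun i _ => star_right_conjugate_nonneg hy0 (t i)
  have hΘw0 : 0 ≤ Θ (x - y) := by
    rw [hΘ]
    exact Finset.sum_nonneg fun i _ => star_right_conjugate_nonneg hw0 (t i)
  have hTx : opTrace b x = opTrace b y + opTrace b (x - y) := by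
    rw [← opTrace_add b hy0 hw0, add_sub_cancel]
  have hTΘ : opTrace b (Θ x) = opTrace b (Θ y) + opTrace b (Θ (x - y)) := by
    rw [hΘadd, opTrace_add b hΘy0 hΘw0]
  have hkey_y : opTrace b (Θ y) ≤ (d : ℝ≥0∞) * opTrace b y := by
    rw [hΘ, hd]
    exact trace_theta_le b hcontr hy0
  have hkey_w : opTrace b (Θ (x - y)) ≤ (d : ℝ≥0∞) * opTrace b (x - y) := by
    rw [hΘ, hd]
    exact trace_theta_le b hcontr hw0
  have hyfin : opTrace b y ≠ ⊤ := by
    refine ne_top_of_le_ne_top hxfin ?_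
    rw [hTx]
    exact le_self_add
  have hwfin : opTrace b (x - y) ≠ ⊤ := by
    refine ne_top_of_le_ne_top hxfin ?_
    rw [hTx]
    exact le_add_self
  have hdwfin : (d : ℝ≥0∞) * opTrace b (x - y) ≠ ⊤ :=
    ENNReal.mul_ne_top (ENNReal.natCast_ne_top d) hwfin
  have hsum : opTrace b (Θ y) + opTrace b (Θ (x - y))
      = (d : ℝ≥0∞) * opTrace b y + (d : ℝ≥0∞) * opTrace b (x - y) := by
    rw [← hTΘ, hscale, hTx, mul_add]
  refine le_antisymm hkey_y ?_
  have h1 : (d : ℝ≥0∞) * opTrace b y + (d : ℝ≥0∞) * opTrace b (x - y)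
      ≤ opTrace b (Θ y) + (d : ℝ≥0∞) * opTrace b (x - y) := by
    rw [← hsum]
    exact add_le_add le_rfl hkey_w
  exact (ENNReal.add_le_add_iff_right hdwfin).mp h1
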